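/- arXiv:1610.03363 — 3 statements merged into one kernel-verified Lean document; each statement's English description precedes it below -/
import Mathlib

section
/- Let V : ℝ → ℝ be C², let c ∈ ℝ, and let u₋ < u₊ satisfy V(u₋) = V(u₊) = c, V(u) < c for all u ∈ (u₋, u₊), V'(u₋) < 0 and V'(u₊) > 0. Then the solution of the Hamiltonian system u̇ = v, v̇ = −V'(u) with initial condition (u(0), v(0)) = (u₋, 0) is periodic, the improper integral ∫_{u₋}^{u₊} du/√(2(c − V(u))) converges, and the period of the solution equals T_c = 2 ∫_{u₋}^{u₊} du/√(2(c − V(u))). -/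
open MeasureTheory intervalIntegral Topology

set_option maxHeartbeats 4000000 in
/-- For a mechanical Hamiltonian system `u̇ = v`, `v̇ = -V'(u)` with a
potential well between consecutive turning points `uLo < uHi` at energy `c`
(with `V(uLo) = V(uHi) = c`, `V < c` inside and nondegenerate turning points),
the solution starting at `(uLo, 0)` is periodic, the improper integral
`∫ du / √(2(c - V(u)))` converges, and the period equals
`T_c = 2 ∫_{uLo}^{uHi} du / √(2(c - V(u)))`. -/
theorem period_of_potential_well_orbit
    (V : ℝ → ℝ) (hV : ContDiff ℝ 2 V)
    (c uLo uHi : ℝ) (hlt : uLo < uHi)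
    (hVm : V uLo = c) (hVp : V uHi = c)
    (hVin : ∀ x ∈ Set.Ioo uLo uHi, V x < c)
    (hV'm : deriv V uLo < 0) (hV'p : 0 < deriv V uHi)
    (u v : ℝ → ℝ)
    (hu : ∀ t : ℝ, HasDerivAt u (v t) t)
    (hv : ∀ t : ℝ, HasDerivAt v (-deriv V (u t)) t)
    (hu0 : u 0 = uLo) (hv0 : v 0 = 0) :
    IntervalIntegrable (fun x => 1 / Real.sqrt (2 * (c - V x))) volume uLo uHi ∧
    0 < 2 * ∫ x in uLo..uHi, 1 / Real.sqrt (2 * (c - V x)) ∧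
    (∀ t : ℝ,
      u (t + 2 * ∫ x in uLo..uHi, 1 / Real.sqrt (2 * (c - V x))) = u t ∧
      v (t + 2 * ∫ x in uLo..uHi, 1 / Real.sqrt (2 * (c - V x))) = v t) := by
  -- notation and basic regularity
  set g : ℝ → ℝ := fun x => Real.sqrt (2 * (c - V x)) with hgdef
  have hVd : Differentiable ℝ V := hV.differentiable two_ne_zero
  have hVc : Continuous V := hVd.continuous
  have hV1 : ContDiff ℝ 1 (deriv V) := by
    have h2 : ContDiff ℝ ((1 : ℕ) + 1) V := by exact_mod_cast hV
    exact (contDiff_succ_iff_deriv.mp h2).2.2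
  have hV'c : Continuous (deriv V) := hV1.continuous
  have hucont : Continuous u := by
    exact continuous_iff_continuousAt.mpr fun t => (hu t).continuousAt
  have hvcont : Continuous v := by
    exact continuous_iff_continuousAt.mpr fun t => (hv t).continuousAt
  have hgcont : Continuous g := by
    exact Real.continuous_sqrt.comp (continuous_const.mul (continuous_const.sub hVc))
  -- energy conservation
  have energy : ∀ t, v t ^ 2 = 2 * (c - V (u t)) := by
    have hE : ∀ t, HasDerivAt (fun t => v t ^ 2 / 2 + V (u t)) 0 t := by
      intro t
      have h1 : HasDerivAt (fun t => v t ^ 2 / 2)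
          ((-deriv V (u t)) * v t) t := by
        have h := (((hv t).mul (hv t))).div_const 2
        have hfun : (fun s => (v * v) s / 2) = fun s => v s ^ 2 / 2 := by
          funext s; simp only [Pi.mul_apply]; ring
        rw [hfun] at h
        exact h.congr_deriv (by ring)
      have h2 : HasDerivAt (fun t => V (u t)) (deriv V (u t) * v t) t :=
        ((hVd (u t)).hasDerivAt).comp t (hu t)
      have := h1.add h2
      exact this.congr_deriv (by ring)
    have hconst : ∀ t, v t ^ 2 / 2 + V (u t) = v 0 ^ 2 / 2 + V (u 0) := by
      intro t
      exact is_const_of_deriv_eq_zero (fun s => (hE s).differentiableAt)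
        (fun s => (hE s).deriv) t 0
    intro t
    have := hconst t
    rw [hu0, hv0, hVm] at this
    nlinarith
  have hVuc : ∀ t, V (u t) ≤ c := fun t => by nlinarith [sq_nonneg (v t), energy t]
  -- confinement
  have hmem : ∀ t, u t ∈ Set.Icc uLo uHi := by
    obtain ⟨ε₁, hε₁, hrightn⟩ : ∃ ε > (0:ℝ), ∀ x, uHi < x → x ≤ uHi + ε → c < V x := by
      obtain ⟨ε, hε, hball⟩ := Metric.continuousAt_iff.mp (hV'c.continuousAt (x := uHi))
        (deriv V uHi / 2) (by linarith)
      refine ⟨ε / 2, by linarith, fun x hx hx' => ?_⟩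
      have hmono : StrictMonoOn V (Set.Icc uHi (uHi + ε / 2)) := by
        apply strictMonoOn_of_deriv_pos (convex_Icc _ _) hVc.continuousOn
        intro y hy
        rw [interior_Icc] at hy
        have hd : dist y uHi < ε := by
          rw [Real.dist_eq, abs_of_nonneg (by linarith [hy.1])]
          linarith [hy.2]
        have := abs_lt.mp (Real.dist_eq _ _ ▸ hball hd)
        linarith [this.1]
      have := hmono (Set.left_mem_Icc.mpr (by linarith)) ⟨hx.le, hx'⟩ hx
      rwa [hVp] at this
    obtain ⟨ε₂, hε₂, hleftn⟩ : ∃ ε > (0:ℝ), ∀ x, uLo - ε ≤ x → x < uLo → c < V x := by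
      obtain ⟨ε, hε, hball⟩ := Metric.continuousAt_iff.mp (hV'c.continuousAt (x := uLo))
        (-(deriv V uLo) / 2) (by linarith)
      refine ⟨ε / 2, by linarith, fun x hx hx' => ?_⟩
      have hanti : StrictAntiOn V (Set.Icc (uLo - ε / 2) uLo) := by
        apply strictAntiOn_of_deriv_neg (convex_Icc _ _) hVc.continuousOn
        intro y hy
        rw [interior_Icc] at hy
        have hd : dist y uLo < ε := by
          rw [Real.dist_eq, abs_of_nonpos (by linarith [hy.2])]
          linarith [hy.1]
        have := abs_lt.mp (Real.dist_eq _ _ ▸ hball hd)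
        linarith [this.2]
      have := hanti ⟨hx, hx'.le⟩ (Set.right_mem_Icc.mpr (by linarith)) hx'
      rwa [hVm] at this
    intro t
    rcases le_or_gt (u t) uHi with h2 | h2
    · rcases le_or_gt uLo (u t) with h1 | h1
      · exact ⟨h1, h2⟩
      exfalso
      rcases le_or_gt (uLo - ε₂) (u t) with h3 | h3
      · exact absurd (hVuc t) (not_le.mpr (hleftn _ h3 h1))
      have hm : uLo - ε₂ ∈ Set.uIcc (u 0) (u t) := by
        rw [hu0, Set.mem_uIcc]
        right
        constructor <;> linarith
      obtain ⟨s, _, hs⟩ := intermediate_value_uIcc hucont.continuousOn hm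
      refine absurd (hVuc s) (not_le.mpr ?_)
      rw [hs]
      exact hleftn _ le_rfl (by linarith)
    · exfalso
      rcases le_or_gt (u t) (uHi + ε₁) with h3 | h3
      · exact absurd (hVuc t) (not_le.mpr (hrightn _ h2 h3))
      have hm : uHi + ε₁ ∈ Set.uIcc (u 0) (u t) := by
        rw [hu0, Set.mem_uIcc]
        left
        constructor <;> linarith
      obtain ⟨s, _, hs⟩ := intermediate_value_uIcc hucont.continuousOn hm
      refine absurd (hVuc s) (not_le.mpr ?_)
      rw [hs]
      exact hrightn _ (by linarith) le_rfl
  -- |v| = g ∘ u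
  have habs : ∀ t, |v t| = g (u t) := by
    intro t
    show |v t| = Real.sqrt (2 * (c - V (u t)))
    rw [← energy t, Real.sqrt_sq_eq_abs]
  -- zeros of v only at turning points
  have hzero : ∀ t, v t = 0 → u t = uLo ∨ u t = uHi := by
    intro t ht
    have h1 : V (u t) = c := by have := energy t; rw [ht] at this; nlinarith
    rcases (hmem t).1.eq_or_lt with h | h
    · exact Or.inl h.symm
    rcases (hmem t).2.eq_or_lt with h' | h'
    · exact Or.inr h'
    exact absurd h1 (ne_of_lt (hVin _ ⟨h, h'⟩))
  -- FTC facts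
  have hFTCu : ∀ a b : ℝ, u b - u a = ∫ t in a..b, v t := by
    intro a b
    exact (intervalIntegral.integral_eq_sub_of_hasDerivAt (fun t _ => hu t)
      (hvcont.intervalIntegrable a b)).symm
  have hFTCv : ∀ a b : ℝ, v b - v a = ∫ t in a..b, -deriv V (u t) := by
    intro a b
    exact (intervalIntegral.integral_eq_sub_of_hasDerivAt (fun t _ => hv t)
      (((hV'c.comp hucont).neg).intervalIntegrable a b)).symm
  -- positivity of v as long as u stays below uHi
  have hδex : ∃ δ > (0:ℝ), ∀ s, 0 < s → s ≤ δ → 0 < v s := by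
    have hc : ContinuousAt (fun s => -deriv V (u s)) 0 := ((hV'c.comp hucont).neg).continuousAt
    have hval : -deriv V (u 0) = -deriv V uLo := by rw [hu0]
    obtain ⟨ε, hε, hball⟩ := Metric.continuousAt_iff.mp hc (-deriv V uLo / 2) (by linarith)
    refine ⟨ε / 2, by linarith, fun s hs hs' => ?_⟩
    have hmono : StrictMonoOn v (Set.Icc 0 (ε / 2)) := by
      apply strictMonoOn_of_deriv_pos (convex_Icc _ _) hvcont.continuousOn
      intro y hy
      rw [interior_Icc] at hy
      have hd : dist y 0 < ε := by
        rw [Real.dist_eq, sub_zero, abs_of_pos hy.1]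
        linarith [hy.2]
      have := abs_lt.mp (Real.dist_eq _ _ ▸ hball hd)
      rw [hval] at this
      rw [(hv y).deriv]
      linarith [this.1]
    have := hmono (Set.left_mem_Icc.mpr (by linarith)) ⟨hs.le, hs'⟩ hs
    rwa [hv0] at this
  obtain ⟨δ, hδ0, hδ⟩ := hδex
  have hkey : ∀ t, 0 < t → (∀ s, 0 < s → s ≤ t → u s < uHi) → 0 < v t := by
    intro t ht hbelow
    by_contra hvt
    push_neg at hvt
    rcases le_or_gt t δ with h | h
    · exact absurd (hδ t ht h) (not_lt.mpr hvt)
    set A := {s | s ∈ Set.Icc δ t ∧ v s ≤ 0} with hA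
    have hAne : A.Nonempty := ⟨t, ⟨⟨h.le, le_rfl⟩, hvt⟩⟩
    have hAclosed : IsClosed A := by
      have hAeq : A = Set.Icc δ t ∩ v ⁻¹' Set.Iic 0 := rfl
      rw [hAeq]
      exact isClosed_Icc.inter (isClosed_Iic.preimage hvcont)
    have hAbdd : BddBelow A := ⟨δ, fun s hs => hs.1.1⟩
    set t₀ := sInf A with ht₀def
    have ht₀A : t₀ ∈ A := hAclosed.csInf_mem hAne hAbdd
    have hδt₀ : δ < t₀ := by
      rcases ht₀A.1.1.eq_or_lt with h' | h'
      · exact absurd ht₀A.2 (not_le.mpr (h' ▸ hδ δ hδ0 le_rfl))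
      · exact h'
    have hvpos' : ∀ s, 0 < s → s < t₀ → 0 < v s := by
      intro s hs hst₀
      rcases le_or_gt s δ with h' | h'
      · exact hδ s hs h'
      by_contra hneg
      push_neg at hneg
      have hsA : s ∈ A := ⟨⟨h'.le, by linarith [ht₀A.1.2]⟩, hneg⟩
      exact absurd (csInf_le hAbdd hsA) (not_le.mpr hst₀)
    have hvt₀0 : v t₀ = 0 := by
      refine le_antisymm ht₀A.2 ?_
      have htd : Filter.Tendsto v (nhdsWithin t₀ (Set.Iio t₀)) (nhds (v t₀)) :=
        (hvcont.continuousAt).continuousWithinAt.tendsto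
      refine ge_of_tendsto htd ?_
      filter_upwards [Ioo_mem_nhdsLT_of_mem (Set.right_mem_Ioc.mpr hδt₀)] with s hs
      exact (hvpos' s (lt_trans hδ0 hs.1) hs.2).le
    have ht₀pos : 0 < t₀ := lt_trans hδ0 hδt₀
    rcases hzero t₀ hvt₀0 with hLo | hHi
    · have hposint : 0 < u t₀ - u 0 := by
        rw [hFTCu 0 t₀]
        apply intervalIntegral.intervalIntegral_pos_of_pos_on
          (hvcont.intervalIntegrable 0 t₀) _ ht₀pos
        intro s hs
        exact hvpos' s hs.1 hs.2
      rw [hu0, hLo] at hposint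
      linarith
    · have := hbelow t₀ ht₀pos ht₀A.1.2
      rw [hHi] at this
      exact lt_irrefl _ this
  -- the orbit reaches uHi in finite time
  have hhit : ∃ t, 0 < t ∧ u t = uHi := by
    by_contra hno
    push_neg at hno
    have hbelow : ∀ s, 0 < s → u s < uHi := fun s hs =>
      lt_of_le_of_ne (hmem s).2 (hno s hs)
    have hpos : ∀ t, 0 < t → 0 < v t := fun t ht =>
      hkey t ht fun s hs _ => hbelow s hs
    have humono : StrictMonoOn u (Set.Ici 0) := by
      apply strictMonoOn_of_deriv_pos (convex_Ici 0) hucont.continuousOn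
      intro s hs
      rw [interior_Ici] at hs
      rw [(hu s).deriv]
      exact hpos s hs
    have hbddA : BddAbove (u '' Set.Ici 0) := by
      refine ⟨uHi, ?_⟩
      rintro x ⟨s, _, rfl⟩
      exact (hmem s).2
    have hne : (u '' Set.Ici 0).Nonempty := ⟨uLo, 0, Set.mem_Ici.mpr le_rfl, hu0⟩
    set L := sSup (u '' Set.Ici 0) with hL
    have hle : ∀ s, 0 ≤ s → u s ≤ L := fun s hs => le_csSup hbddA ⟨s, hs, rfl⟩
    have hu1 : uLo < u 1 := by
      have := humono (Set.mem_Ici.mpr le_rfl) (Set.mem_Ici.mpr zero_le_one) zero_lt_one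
      rwa [hu0] at this
    have hLuHi : L ≤ uHi := by
      refine csSup_le hne ?_
      rintro x ⟨s, _, rfl⟩
      exact (hmem s).2
    have hu1L : u 1 ≤ L := hle 1 zero_le_one
    have htend : Filter.Tendsto u Filter.atTop (nhds L) := by
      rw [tendsto_order]
      constructor
      · intro a ha
        obtain ⟨x, ⟨s, hs, rfl⟩, hax⟩ := exists_lt_of_lt_csSup hne ha
        filter_upwards [Filter.eventually_ge_atTop s] with t ht'
        exact lt_of_lt_of_le hax (humono.monotoneOn hs (Set.mem_Ici.mpr (le_trans hs ht')) ht')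
      · intro a ha
        filter_upwards [Filter.eventually_ge_atTop 0] with t ht'
        exact lt_of_le_of_lt (hle t ht') ha
    rcases eq_or_lt_of_le hLuHi with hEq | hLlt
    · -- u tends to uHi : v' eventually ≤ -k forces v to become negative
      rw [hEq] at htend
      have htd' : Filter.Tendsto (fun t => deriv V (u t)) Filter.atTop (nhds (deriv V uHi)) :=
        (hV'c.continuousAt.tendsto).comp htend
      set k := deriv V uHi / 2 with hk
      have hk0 : 0 < k := by rw [hk]; linarith
      have hev : ∀ᶠ t in Filter.atTop, k < deriv V (u t) :=
        htd'.eventually (eventually_gt_nhds (by rw [hk]; linarith))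
      obtain ⟨a, ha⟩ := Filter.eventually_atTop.mp hev
      set t₂ := max a 1 with ht₂def
      have ht₂1 : (1:ℝ) ≤ t₂ := le_max_right a 1
      have ht₂pos : (0:ℝ) < t₂ := lt_of_lt_of_le zero_lt_one ht₂1
      set t₃ := t₂ + (v t₂ + 1) / k with ht₃def
      have hvt₂ : 0 < v t₂ := hpos t₂ ht₂pos
      have ht₂₃ : t₂ ≤ t₃ := by
        rw [ht₃def]
        have : 0 < (v t₂ + 1) / k := div_pos (by linarith) hk0
        linarith
      have hbound : v t₃ - v t₂ ≤ (t₃ - t₂) * (-k) := by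
        rw [hFTCv t₂ t₃]
        have h1 : (∫ s in t₂..t₃, -deriv V (u s)) ≤ ∫ _ in t₂..t₃, -k := by
          apply intervalIntegral.integral_mono_on ht₂₃
            (((hV'c.comp hucont).neg).intervalIntegrable t₂ t₃)
            (intervalIntegrable_const)
          intro s hs
          have := ha s (le_trans (le_max_left a 1) hs.1)
          simp only [Pi.neg_apply, Function.comp_apply]
          linarith
        rw [intervalIntegral.integral_const, smul_eq_mul] at h1
        exact h1
      have ht₃t₂ : t₃ - t₂ = (v t₂ + 1) / k := by rw [ht₃def]; ring
      rw [ht₃t₂] at hbound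
      have : (v t₂ + 1) / k * k = v t₂ + 1 := div_mul_cancel₀ _ (ne_of_gt hk0)
      have hneg : v t₃ ≤ -1 := by nlinarith
      have := hpos t₃ (lt_of_lt_of_le ht₂pos ht₂₃)
      linarith
    · -- L < uHi : u moves with speed bounded below, escapes to infinity
      have hKsub : Set.Icc (u 1) L ⊆ Set.Ioo uLo uHi := fun x hx =>
        ⟨lt_of_lt_of_le hu1 hx.1, lt_of_le_of_lt hx.2 hLlt⟩
      obtain ⟨x₀, hx₀K, hx₀min⟩ :=
        isCompact_Icc.exists_isMinOn ⟨u 1, le_rfl, hu1L⟩ hgcont.continuousOn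
      have hm : 0 < g x₀ := by
        have := hVin x₀ (hKsub hx₀K)
        exact Real.sqrt_pos.mpr (by linarith)
      have hvge : ∀ t, 1 ≤ t → g x₀ ≤ v t := by
        intro t ht
        have hvt := hpos t (by linarith)
        have hveq : v t = g (u t) := by rw [← habs t, abs_of_pos hvt]
        rw [hveq]
        refine isMinOn_iff.mp hx₀min (u t) ⟨?_, hle t (by linarith)⟩
        exact humono.monotoneOn (Set.mem_Ici.mpr zero_le_one)
          (Set.mem_Ici.mpr (by linarith)) ht
      set t₃ := 1 + (uHi - uLo + 1) / g x₀ with ht₃def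
      have h13 : (1:ℝ) ≤ t₃ := by
        rw [ht₃def]
        have : 0 < (uHi - uLo + 1) / g x₀ := div_pos (by linarith) hm
        linarith
      have hbound : (t₃ - 1) * g x₀ ≤ u t₃ - u 1 := by
        rw [hFTCu 1 t₃]
        have h1 : (∫ _ in (1:ℝ)..t₃, g x₀) ≤ ∫ s in (1:ℝ)..t₃, v s := by
          apply intervalIntegral.integral_mono_on h13 intervalIntegrable_const
            (hvcont.intervalIntegrable 1 t₃)
          intro s hs
          exact hvge s hs.1
        rwa [intervalIntegral.integral_const, smul_eq_mul] at h1
      have ht₃1 : t₃ - 1 = (uHi - uLo + 1) / g x₀ := by rw [ht₃def]; ring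
      rw [ht₃1, div_mul_cancel₀ _ (ne_of_gt hm)] at hbound
      have := (hmem t₃).2
      linarith
  -- first hitting time
  obtain ⟨T, hT0, hTHi, hTmax⟩ :
      ∃ T, 0 < T ∧ u T = uHi ∧ ∀ s, 0 < s → s < T → u s < uHi := by
    obtain ⟨t₁, ht₁pos, ht₁⟩ := hhit
    set B := {s | s ∈ Set.Icc 0 t₁ ∧ u s = uHi} with hB
    have hBne : B.Nonempty := ⟨t₁, ⟨⟨ht₁pos.le, le_rfl⟩, ht₁⟩⟩
    have hBclosed : IsClosed B := by
      have hBeq : B = Set.Icc 0 t₁ ∩ u ⁻¹' {uHi} := rfl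
      rw [hBeq]
      exact isClosed_Icc.inter (isClosed_singleton.preimage hucont)
    have hBbdd : BddBelow B := ⟨0, fun s hs => hs.1.1⟩
    set T := sInf B with hTdef
    have hTB : T ∈ B := hBclosed.csInf_mem hBne hBbdd
    have hT0 : 0 < T := by
      rcases hTB.1.1.eq_or_lt with h | h
      · exfalso
        have h2 := hTB.2
        rw [← h, hu0] at h2
        linarith
      · exact h
    refine ⟨T, hT0, hTB.2, ?_⟩
    intro s hs hsT
    refine lt_of_le_of_ne (hmem s).2 ?_
    intro heq
    have hsB : s ∈ B := ⟨⟨hs.le, le_trans hsT.le hTB.1.2⟩, heq⟩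
    exact absurd (csInf_le hBbdd hsB) (not_le.mpr hsT)
  have hvT : v T = 0 := by
    have := energy T
    rw [hTHi, hVp] at this
    nlinarith
  have hvpos : ∀ s, 0 < s → s < T → 0 < v s := by
    intro s hs hsT
    exact hkey s hs fun σ hσ hσs => hTmax σ hσ (lt_of_le_of_lt hσs hsT)
  have humono : StrictMonoOn u (Set.Icc 0 T) := by
    apply strictMonoOn_of_deriv_pos (convex_Icc 0 T) hucont.continuousOn
    intro s hs
    rw [interior_Icc] at hs
    rw [(hu s).deriv]
    exact hvpos s hs.1 hs.2
  have huin : ∀ s, 0 < s → s < T → u s ∈ Set.Ioo uLo uHi := by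
    intro s hs hsT
    refine ⟨?_, hTmax s hs hsT⟩
    have := humono (Set.left_mem_Icc.mpr hT0.le) ⟨hs.le, (le_of_lt (lt_of_lt_of_le hsT le_rfl))⟩ hs
    rwa [hu0] at this
  -- integrability of the improper integral
  have hgpos : ∀ x ∈ Set.Ioo uLo uHi, 0 < g x := by
    intro x hx
    have := hVin x hx
    exact Real.sqrt_pos.mpr (by linarith)
  have hfmeas : Measurable (fun x => 1 / Real.sqrt (2 * (c - V x))) := by
    simp only [one_div]
    exact hgcont.measurable.inv
  obtain ⟨δ₁, hδ₁pos, hδ₁half, k₁, hk₁pos, hlow⟩ :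
      ∃ δ₁ > (0:ℝ), δ₁ ≤ (uHi - uLo) / 2 ∧ ∃ k₁ > (0:ℝ),
        ∀ x, uLo < x → x ≤ uLo + δ₁ → k₁ * (x - uLo) ≤ c - V x := by
    obtain ⟨ε, hε, hball⟩ := Metric.continuousAt_iff.mp (hV'c.continuousAt (x := uLo))
      (-(deriv V uLo) / 2) (by linarith)
    refine ⟨min (ε / 2) ((uHi - uLo) / 2), lt_min (by linarith) (by linarith), min_le_right _ _,
      -(deriv V uLo) / 2, by linarith, ?_⟩
    intro x hx hx'
    have hxd : x - uLo ≤ ε / 2 := by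
      have := le_trans (by linarith : x - uLo ≤ min (ε / 2) ((uHi - uLo) / 2)) (min_le_left _ _)
      linarith
    have hderiv_le : ∀ y ∈ Set.Icc uLo x, deriv V y ≤ deriv V uLo / 2 := by
      intro y hy
      have hd : dist y uLo < ε := by
        rw [Real.dist_eq, abs_of_nonneg (by linarith [hy.1])]
        linarith [hy.2]
      have := abs_lt.mp (Real.dist_eq _ _ ▸ hball hd)
      linarith [this.2]
    have hftc : V x - V uLo = ∫ y in uLo..x, deriv V y :=
      (intervalIntegral.integral_eq_sub_of_hasDerivAt
        (fun y _ => (hVd y).hasDerivAt) (hV'c.intervalIntegrable _ _)).symm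
    have hmono2 : (∫ y in uLo..x, deriv V y) ≤ ∫ _ in uLo..x, deriv V uLo / 2 :=
      intervalIntegral.integral_mono_on hx.le (hV'c.intervalIntegrable _ _)
        intervalIntegrable_const hderiv_le
    rw [intervalIntegral.integral_const, smul_eq_mul] at hmono2
    rw [hVm] at hftc
    linarith [hftc, hmono2]
  obtain ⟨δ₂, hδ₂pos, hδ₂half, k₂, hk₂pos, hhigh⟩ :
      ∃ δ₂ > (0:ℝ), δ₂ ≤ (uHi - uLo) / 2 ∧ ∃ k₂ > (0:ℝ),
        ∀ x, uHi - δ₂ ≤ x → x < uHi → k₂ * (uHi - x) ≤ c - V x := by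
    obtain ⟨ε, hε, hball⟩ := Metric.continuousAt_iff.mp (hV'c.continuousAt (x := uHi))
      (deriv V uHi / 2) (by linarith)
    refine ⟨min (ε / 2) ((uHi - uLo) / 2), lt_min (by linarith) (by linarith), min_le_right _ _,
      deriv V uHi / 2, by linarith, ?_⟩
    intro x hx hx'
    have hxd : uHi - x ≤ ε / 2 := by
      have := le_trans (by linarith : uHi - x ≤ min (ε / 2) ((uHi - uLo) / 2)) (min_le_left _ _)
      linarith
    have hderiv_ge : ∀ y ∈ Set.Icc x uHi, deriv V uHi / 2 ≤ deriv V y := by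
      intro y hy
      have hd : dist y uHi < ε := by
        rw [Real.dist_eq, abs_of_nonpos (by linarith [hy.2])]
        linarith [hy.1]
      have := abs_lt.mp (Real.dist_eq _ _ ▸ hball hd)
      linarith [this.1]
    have hftc : V uHi - V x = ∫ y in x..uHi, deriv V y :=
      (intervalIntegral.integral_eq_sub_of_hasDerivAt
        (fun y _ => (hVd y).hasDerivAt) (hV'c.intervalIntegrable _ _)).symm
    have hmono2 : (∫ _ in x..uHi, deriv V uHi / 2) ≤ ∫ y in x..uHi, deriv V y :=
      intervalIntegral.integral_mono_on hx'.le intervalIntegrable_const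
        (hV'c.intervalIntegrable _ _) hderiv_ge
    rw [intervalIntegral.integral_const, smul_eq_mul] at hmono2
    rw [hVp] at hftc
    linarith [hftc, hmono2]
  have hIbase₁ : IntervalIntegrable (fun x : ℝ => (x - uLo) ^ (-(1/2) : ℝ))
      volume uLo (uLo + δ₁) := by
    have h := (intervalIntegral.intervalIntegrable_rpow' (a := 0) (b := δ₁)
      (r := -(1/2)) (by norm_num)).comp_sub_right uLo
    simpa [zero_add, add_comm] using h
  have hIbase₂ : IntervalIntegrable (fun x : ℝ => (uHi - x) ^ (-(1/2) : ℝ))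
      volume (uHi - δ₂) uHi := by
    have h := ((intervalIntegral.intervalIntegrable_rpow' (a := 0) (b := δ₂)
      (r := -(1/2)) (by norm_num)).comp_sub_left uHi).symm
    simpa using h
  have hI1 : IntervalIntegrable (fun x => 1 / Real.sqrt (2 * (c - V x)))
      volume uLo (uLo + δ₁) := by
    apply IntervalIntegrable.mono_fun (hIbase₁.const_mul (1 / Real.sqrt (2 * k₁)))
      hfmeas.aestronglyMeasurable
    rw [Set.uIoc_of_le (by linarith : uLo ≤ uLo + δ₁)]
    filter_upwards [ae_restrict_mem measurableSet_Ioc] with x hx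
    have hy : 0 < x - uLo := by linarith [hx.1]
    have hcV : k₁ * (x - uLo) ≤ c - V x := hlow x hx.1 hx.2
    have h2k : (0:ℝ) < 2 * k₁ := by linarith
    have heq : 1 / Real.sqrt (2 * k₁) * (x - uLo) ^ (-(1/2) : ℝ)
        = 1 / Real.sqrt (2 * k₁ * (x - uLo)) := by
      have h1 : (x - uLo) ^ (-(1/2) : ℝ) = 1 / Real.sqrt (x - uLo) := by
        rw [Real.rpow_neg hy.le, ← Real.sqrt_eq_rpow, one_div]
      rw [h1, Real.sqrt_mul h2k.le, div_mul_div_comm, one_mul]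
    have hL0 : (0:ℝ) ≤ 1 / Real.sqrt (2 * (c - V x)) :=
      one_div_nonneg.mpr (Real.sqrt_nonneg _)
    have hsqle : Real.sqrt (2 * k₁ * (x - uLo)) ≤ Real.sqrt (2 * (c - V x)) :=
      Real.sqrt_le_sqrt (by linarith [hcV])
    have hsqpos : 0 < Real.sqrt (2 * k₁ * (x - uLo)) :=
      Real.sqrt_pos.mpr (mul_pos h2k hy)
    have hR0 : (0:ℝ) ≤ 1 / Real.sqrt (2 * k₁) * (x - uLo) ^ (-(1/2) : ℝ) := by
      rw [heq]
      exact one_div_nonneg.mpr (Real.sqrt_nonneg _)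
    rw [Real.norm_eq_abs, Real.norm_eq_abs, abs_of_nonneg hL0, abs_of_nonneg hR0, heq]
    exact one_div_le_one_div_of_le hsqpos hsqle
  have hI3 : IntervalIntegrable (fun x => 1 / Real.sqrt (2 * (c - V x)))
      volume (uHi - δ₂) uHi := by
    apply IntervalIntegrable.mono_fun (hIbase₂.const_mul (1 / Real.sqrt (2 * k₂)))
      hfmeas.aestronglyMeasurable
    rw [Set.uIoc_of_le (by linarith : uHi - δ₂ ≤ uHi)]
    filter_upwards [ae_restrict_mem measurableSet_Ioc] with x hx
    rcases hx.2.eq_or_lt with hxe | hxe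
    · rw [hxe]
      have : Real.sqrt (2 * (c - V uHi)) = 0 := by rw [hVp]; simp
      rw [Real.norm_eq_abs, this]
      simp only [div_zero, abs_zero]
      exact abs_nonneg _
    have hy : 0 < uHi - x := by linarith
    have hcV : k₂ * (uHi - x) ≤ c - V x := hhigh x (by linarith [hx.1]) hxe
    have h2k : (0:ℝ) < 2 * k₂ := by linarith
    have heq : 1 / Real.sqrt (2 * k₂) * (uHi - x) ^ (-(1/2) : ℝ)
        = 1 / Real.sqrt (2 * k₂ * (uHi - x)) := by
      have h1 : (uHi - x) ^ (-(1/2) : ℝ) = 1 / Real.sqrt (uHi - x) := by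
        rw [Real.rpow_neg hy.le, ← Real.sqrt_eq_rpow, one_div]
      rw [h1, Real.sqrt_mul h2k.le, div_mul_div_comm, one_mul]
    have hL0 : (0:ℝ) ≤ 1 / Real.sqrt (2 * (c - V x)) :=
      one_div_nonneg.mpr (Real.sqrt_nonneg _)
    have hsqle : Real.sqrt (2 * k₂ * (uHi - x)) ≤ Real.sqrt (2 * (c - V x)) :=
      Real.sqrt_le_sqrt (by linarith [hcV])
    have hsqpos : 0 < Real.sqrt (2 * k₂ * (uHi - x)) :=
      Real.sqrt_pos.mpr (mul_pos h2k hy)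
    have hR0 : (0:ℝ) ≤ 1 / Real.sqrt (2 * k₂) * (uHi - x) ^ (-(1/2) : ℝ) := by
      rw [heq]
      exact one_div_nonneg.mpr (Real.sqrt_nonneg _)
    rw [Real.norm_eq_abs, Real.norm_eq_abs, abs_of_nonneg hL0, abs_of_nonneg hR0, heq]
    exact one_div_le_one_div_of_le hsqpos hsqle
  have hI2 : IntervalIntegrable (fun x => 1 / Real.sqrt (2 * (c - V x)))
      volume (uLo + δ₁) (uHi - δ₂) := by
    apply ContinuousOn.intervalIntegrable
    have hss : Set.uIcc (uLo + δ₁) (uHi - δ₂) ⊆ Set.Ioo uLo uHi := by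
      rw [Set.uIcc_of_le (by linarith)]
      intro x hx
      exact ⟨by linarith [hx.1], by linarith [hx.2]⟩
    intro x hx
    exact ContinuousWithinAt.div continuousWithinAt_const
      hgcont.continuousAt.continuousWithinAt (ne_of_gt (hgpos x (hss hx)))
  have hint : IntervalIntegrable (fun x => 1 / Real.sqrt (2 * (c - V x))) volume uLo uHi :=
    (hI1.trans hI2).trans hI3
  -- the first quarter... half period equals the integral
  have hTI : (∫ x in uLo..uHi, 1 / Real.sqrt (2 * (c - V x))) = T := by
    have hsub : ∀ x y : ℝ, 0 < x → x ≤ y → y < T →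
        (∫ z in (u x)..(u y), 1 / Real.sqrt (2 * (c - V z))) = y - x := by
      intro x y hx hxy hyT
      have himg : ∀ z ∈ Set.uIcc x y, u z ∈ Set.Ioo uLo uHi := by
        intro z hz
        rw [Set.uIcc_of_le hxy] at hz
        exact huin z (lt_of_lt_of_le hx hz.1) (lt_of_le_of_lt hz.2 hyT)
      have hgc : ContinuousOn (fun z => 1 / Real.sqrt (2 * (c - V z))) (u '' Set.uIcc x y) := by
        rintro w ⟨z, hz, rfl⟩
        exact ContinuousWithinAt.div continuousWithinAt_const
          hgcont.continuousAt.continuousWithinAt (ne_of_gt (hgpos _ (himg z hz)))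
      have h1 := intervalIntegral.integral_comp_smul_deriv' (f := u) (f' := v)
        (g := fun z => 1 / Real.sqrt (2 * (c - V z)))
        (fun z _ => hu z) hvcont.continuousOn hgc
      rw [← h1]
      have h2 : Set.EqOn (fun z => v z • (1 / Real.sqrt (2 * (c - V (u z)))))
          (fun _ => (1:ℝ)) (Set.uIcc x y) := by
        intro z hz
        rw [Set.uIcc_of_le hxy] at hz
        have hvz : 0 < v z := hvpos z (lt_of_lt_of_le hx hz.1) (lt_of_le_of_lt hz.2 hyT)
        have h3 := habs z
        rw [abs_of_pos hvz] at h3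
        have h4 : Real.sqrt (2 * (c - V (u z))) = v z := h3.symm
        show v z • (1 / Real.sqrt (2 * (c - V (u z)))) = 1
        rw [h4, smul_eq_mul]
        field_simp
      have h5 : (∫ z in x..y, v z • ((fun w => 1 / Real.sqrt (2 * (c - V w))) ∘ u) z)
          = ∫ z in x..y, (1:ℝ) := intervalIntegral.integral_congr h2
      rw [h5, integral_one]
    have hintsub : ∀ y, y ∈ Set.Icc uLo uHi →
        IntervalIntegrable (fun x => 1 / Real.sqrt (2 * (c - V x))) volume uLo y := by
      intro y hy
      apply hint.mono_set
      rw [Set.uIcc_of_le hy.1, Set.uIcc_of_le hlt.le]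
      exact Set.Icc_subset_Icc_right hy.2
    set F : ℝ → ℝ := fun y => ∫ x in uLo..y, 1 / Real.sqrt (2 * (c - V x)) with hFdef
    have hFcont : ContinuousOn F (Set.Icc uLo uHi) := by
      have h := intervalIntegral.continuousOn_primitive_interval (a := uLo) (b := uHi)
        (μ := volume) (f := fun x => 1 / Real.sqrt (2 * (c - V x)))
        (by rw [Set.uIcc_of_le hlt.le]
            exact (integrableOn_Icc_iff_integrableOn_Ioc).mpr hint.1)
      rwa [Set.uIcc_of_le hlt.le] at h
    have hcast : ∀ n : ℕ, (1:ℝ) ≤ (n:ℝ) + 1 := by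
      intro n
      have : (0:ℝ) ≤ (n:ℝ) := Nat.cast_nonneg n
      linarith
    set aa : ℕ → ℝ := fun n => T / (2 * ((n:ℝ) + 1)) with haadef
    set bb : ℕ → ℝ := fun n => T - T / (2 * ((n:ℝ) + 1)) with hbbdef
    have haa0 : ∀ n, 0 < aa n := fun n => div_pos hT0 (by positivity)
    have haahalf : ∀ n : ℕ, aa n ≤ T / 2 := by
      intro n
      show T / (2 * ((n:ℝ) + 1)) ≤ T / 2
      rw [div_le_div_iff₀ (by positivity) (by norm_num)]
      nlinarith [hcast n, hT0.le, mul_nonneg hT0.le (Nat.cast_nonneg (α := ℝ) n)]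
    have haale : ∀ n, aa n ≤ bb n := by
      intro n
      have h1 := haahalf n
      have h2 := haa0 n
      show aa n ≤ T - T / (2 * ((n:ℝ) + 1))
      have : T / (2 * ((n:ℝ) + 1)) = aa n := rfl
      rw [this]
      linarith
    have hbbT : ∀ n, bb n < T := by
      intro n
      have h2 := haa0 n
      show T - T / (2 * ((n:ℝ) + 1)) < T
      have : T / (2 * ((n:ℝ) + 1)) = aa n := rfl
      rw [this]
      linarith
    have key : ∀ n : ℕ, F (u (bb n)) - F (u (aa n)) = bb n - aa n := by
      intro n
      have h := intervalIntegral.integral_interval_sub_left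
        (hintsub (u (bb n)) (hmem _)) (hintsub (u (aa n)) (hmem _))
      calc F (u (bb n)) - F (u (aa n))
          = ∫ z in (u (aa n))..(u (bb n)), 1 / Real.sqrt (2 * (c - V z)) := h
        _ = bb n - aa n := hsub _ _ (haa0 n) (haale n) (hbbT n)
    have htendsa : Filter.Tendsto aa Filter.atTop (𝓝 0) := by
      have h0 := tendsto_one_div_add_atTop_nhds_zero_nat (𝕜 := ℝ)
      have h1 := h0.const_mul (T / 2)
      rw [mul_zero] at h1
      refine h1.congr fun n => ?_
      show T / 2 * (1 / ((n:ℝ) + 1)) = T / (2 * ((n:ℝ) + 1))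
      have hne : ((n:ℝ) + 1) ≠ 0 := by positivity
      field_simp
    have htendsb : Filter.Tendsto bb Filter.atTop (𝓝 T) := by
      have h1 := (tendsto_const_nhds : Filter.Tendsto (fun _ : ℕ => T) Filter.atTop (𝓝 T)).sub htendsa
      rw [sub_zero] at h1
      exact h1
    have hua : Filter.Tendsto (fun n => u (aa n)) Filter.atTop (𝓝 uLo) := by
      have h1 := ((hucont.continuousAt (x := 0)).tendsto).comp htendsa
      rw [hu0] at h1
      exact h1
    have hub : Filter.Tendsto (fun n => u (bb n)) Filter.atTop (𝓝 uHi) := by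
      have h1 := ((hucont.continuousAt (x := T)).tendsto).comp htendsb
      rw [hTHi] at h1
      exact h1
    have huaIcc : Filter.Tendsto (fun n => u (aa n)) Filter.atTop (𝓝[Set.Icc uLo uHi] uLo) :=
      tendsto_nhdsWithin_iff.mpr ⟨hua, Filter.Eventually.of_forall fun n => hmem _⟩
    have hubIcc : Filter.Tendsto (fun n => u (bb n)) Filter.atTop (𝓝[Set.Icc uLo uHi] uHi) :=
      tendsto_nhdsWithin_iff.mpr ⟨hub, Filter.Eventually.of_forall fun n => hmem _⟩
    have hFua : Filter.Tendsto (fun n => F (u (aa n))) Filter.atTop (𝓝 (F uLo)) :=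
      (hFcont uLo ⟨le_rfl, hlt.le⟩).tendsto.comp huaIcc
    have hFub : Filter.Tendsto (fun n => F (u (bb n))) Filter.atTop (𝓝 (F uHi)) :=
      (hFcont uHi ⟨hlt.le, le_rfl⟩).tendsto.comp hubIcc
    have h1 := hFub.sub hFua
    have h2 := htendsb.sub htendsa
    rw [sub_zero] at h2
    have h3 : Filter.Tendsto (fun n => bb n - aa n) Filter.atTop (𝓝 (F uHi - F uLo)) :=
      h1.congr fun n => key n
    have h4 := tendsto_nhds_unique h3 h2
    have hFlo : F uLo = 0 := intervalIntegral.integral_same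
    show F uHi = T
    rw [← h4, hFlo, sub_zero]
  refine ⟨hint, by rw [hTI]; linarith, ?_⟩
  rw [hTI]
  -- global bound on v
  obtain ⟨x₀, hx₀mem, hx₀min⟩ :=
    isCompact_Icc.exists_isMinOn (Set.nonempty_Icc.mpr hlt.le) hVc.continuousOn
  set M := Real.sqrt (2 * (c - V x₀)) with hM
  have hvM : ∀ t, v t ∈ Set.Icc (-M) M := by
    intro t
    have h1 : v t ^ 2 ≤ 2 * (c - V x₀) := by
      rw [energy t]
      have := isMinOn_iff.mp hx₀min (u t) (hmem t)
      linarith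
    have h2 : |v t| ≤ M := by
      rw [hM, ← Real.sqrt_sq_eq_abs]
      exact Real.sqrt_le_sqrt h1
    rcases abs_le.mp h2 with ⟨hl, hr⟩
    exact ⟨hl, hr⟩
  set K : Set (ℝ × ℝ) := Set.Icc uLo uHi ×ˢ Set.Icc (-M) M with hK
  -- Lipschitz bound for the vector field on K
  obtain ⟨C, hC⟩ : ∃ C, ∀ x ∈ Set.Icc uLo uHi, ‖deriv (deriv V) x‖ ≤ C :=
    isCompact_Icc.exists_bound_of_continuousOn (hV1.continuous_deriv le_rfl).continuousOn
  set L : NNReal := ⟨max C 0, le_max_right _ _⟩ with hLdef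
  have hVlip : LipschitzOnWith L (deriv V) (Set.Icc uLo uHi) := by
    refine Convex.lipschitzOnWith_of_nnnorm_deriv_le
      (fun x _ => (hV1.differentiable one_ne_zero) x)
      (fun x hx => ?_) (convex_Icc _ _)
    have := hC x hx
    rw [← NNReal.coe_le_coe, coe_nnnorm]
    exact le_trans this (le_max_left _ _)
  set W : ℝ × ℝ → ℝ × ℝ := fun p => (p.2, -deriv V p.1) with hW
  set LK : NNReal := 1 ⊔ L with hLK
  have hWlip : LipschitzOnWith LK W K := by
    rw [lipschitzOnWith_iff_dist_le_mul]
    intro p hp q hq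
    have hp1 : p.1 ∈ Set.Icc uLo uHi := hp.1
    have hq1 : q.1 ∈ Set.Icc uLo uHi := hq.1
    have h2 : dist (deriv V p.1) (deriv V q.1) ≤ (L : ℝ) * dist p.1 q.1 :=
      lipschitzOnWith_iff_dist_le_mul.mp hVlip p.1 hp1 q.1 hq1
    have h5 : (L : ℝ) ≤ (LK : ℝ) := by
      rw [hLK]
      exact_mod_cast le_max_right 1 L
    have h6 : (1 : ℝ) ≤ (LK : ℝ) := by
      rw [hLK]
      exact_mod_cast le_max_left 1 L
    have hWpq : dist (W p) (W q)
        = max (dist p.2 q.2) (dist (deriv V p.1) (deriv V q.1)) := by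
      rw [Prod.dist_eq]
      show max (dist p.2 q.2) (dist (-deriv V p.1) (-deriv V q.1)) = _
      rw [dist_neg_neg]
    rw [hWpq, Prod.dist_eq]
    have hd1 : (0:ℝ) ≤ dist p.1 q.1 := dist_nonneg
    have hd2 : (0:ℝ) ≤ dist p.2 q.2 := dist_nonneg
    apply max_le
    · calc dist p.2 q.2 ≤ max (dist p.1 q.1) (dist p.2 q.2) := le_max_right _ _
        _ ≤ (LK : ℝ) * max (dist p.1 q.1) (dist p.2 q.2) := by
            nlinarith [le_max_left (dist p.1 q.1) (dist p.2 q.2), h6,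
              le_trans hd2 (le_max_right (dist p.1 q.1) (dist p.2 q.2))]
    · calc dist (deriv V p.1) (deriv V q.1) ≤ (L : ℝ) * dist p.1 q.1 := h2
        _ ≤ (LK : ℝ) * max (dist p.1 q.1) (dist p.2 q.2) := by
            have hL0 : (0:ℝ) ≤ (L : ℝ) := L.2
            have hm1 : dist p.1 q.1 ≤ max (dist p.1 q.1) (dist p.2 q.2) := le_max_left _ _
            nlinarith [le_trans hd1 hm1]
  -- uniqueness of solutions staying in K
  have huniq : ∀ (f₁ f₂ : ℝ → ℝ × ℝ), (∀ t, HasDerivAt f₁ (W (f₁ t)) t) →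
      (∀ t, f₁ t ∈ K) → (∀ t, HasDerivAt f₂ (W (f₂ t)) t) → (∀ t, f₂ t ∈ K) →
      ∀ t₀, f₁ t₀ = f₂ t₀ → ∀ t, f₁ t = f₂ t := by
    intro f₁ f₂ hf₁ hf₁K hf₂ hf₂K t₀ heq t
    have hR : t ∈ Set.Ioo (t₀ - (|t - t₀| + 1)) (t₀ + (|t - t₀| + 1)) := by
      have h1 := le_abs_self (t - t₀)
      have h2 := neg_abs_le (t - t₀)
      constructor <;> linarith
    have ht₀mem : t₀ ∈ Set.Ioo (t₀ - (|t - t₀| + 1)) (t₀ + (|t - t₀| + 1)) := by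
      have h3 := abs_nonneg (t - t₀)
      constructor <;> linarith
    exact ODE_solution_unique_of_mem_Ioo (fun _ _ => hWlip) ht₀mem
      (fun s _ => ⟨hf₁ s, hf₁K s⟩) (fun s _ => ⟨hf₂ s, hf₂K s⟩) heq hR
  have hsol : ∀ t, HasDerivAt (fun s => (u s, v s)) (W ((u t, v t))) t :=
    fun t => (hu t).prodMk (hv t)
  have hsolK : ∀ t, ((u t, v t) : ℝ × ℝ) ∈ K :=
    fun t => Set.mk_mem_prod (hmem t) (hvM t)
  have hreflect : ∀ r : ℝ, v r = 0 → ∀ t, u (2 * r - t) = u t ∧ v (2 * r - t) = -v t := by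
    intro r hr
    have hf₂d : ∀ s : ℝ, HasDerivAt (fun τ => ((u (2 * r - τ), -v (2 * r - τ)) : ℝ × ℝ))
        (W ((u (2 * r - s), -v (2 * r - s)))) s := by
      intro s
      have hin : HasDerivAt (fun τ : ℝ => 2 * r - τ) (-1) s := by
        simpa using (hasDerivAt_id s).const_sub (2 * r)
      have h1 : HasDerivAt (fun τ => u (2 * r - τ)) (v (2 * r - s) * (-1)) s :=
        (hu (2 * r - s)).comp s hin
      have h2 : HasDerivAt (fun τ => v (2 * r - τ)) (-deriv V (u (2 * r - s)) * (-1)) s :=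
        (hv (2 * r - s)).comp s hin
      have h3 := h1.prodMk h2.neg
      have hval : W ((u (2 * r - s), -v (2 * r - s)))
          = ((v (2 * r - s) * (-1), -(-deriv V (u (2 * r - s)) * (-1))) : ℝ × ℝ) := by
        show ((-v (2 * r - s), -deriv V (u (2 * r - s))) : ℝ × ℝ) = _
        rw [Prod.mk.injEq]
        constructor <;> ring
      rw [hval]
      exact h3
    have hf₂K : ∀ s : ℝ, ((u (2 * r - s), -v (2 * r - s)) : ℝ × ℝ) ∈ K := by
      intro s
      refine Set.mk_mem_prod (hmem _) ?_
      have h := hvM (2 * r - s)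
      exact ⟨by linarith [h.2], by linarith [h.1]⟩
    have heq0 : ((u r, v r) : ℝ × ℝ) = ((u (2 * r - r), -v (2 * r - r)) : ℝ × ℝ) := by
      rw [show 2 * r - r = r by ring, hr, neg_zero]
    intro t
    have hthis := huniq _ _ hsol hsolK hf₂d hf₂K r heq0 t
    have h1 : u t = u (2 * r - t) := congrArg Prod.fst hthis
    have h2 : v t = -v (2 * r - t) := congrArg Prod.snd hthis
    exact ⟨h1.symm, by linarith⟩
  have hsym0 := hreflect 0 hv0
  have hsymT := hreflect T hvT
  intro t
  have e0 : u (-t) = u t ∧ v (-t) = -v t := by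
    have h := hsym0 t
    rwa [show (2:ℝ) * 0 - t = -t by ring] at h
  have eT := hsymT (t + 2 * T)
  rw [show 2 * T - (t + 2 * T) = -t by ring] at eT
  constructor
  · exact (eT.1.symm).trans e0.1
  · have := eT.2
    have h2 := e0.2
    linarith
end

section
/- Let m and n be coprime positive integers with n ≥ 2, let T > 0, and set T_c = mT/n. Let p : ℝ → ℝ be locally integrable and T_c-periodic (p(t + T_c) = p(t) for almost every t). Then for every t₀ ∈ ℝ, ∫₀^{mT} p(t) sin((2π/T)(t + t₀)) dt = 0. In particular, for a forcing g(x,t) = sin(ωt) with ω = 2π/T, the subharmonic Melnikov function along any T_c-periodic unperturbed orbit with rotation number n/m, n ≥ 2, is identically zero. -/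
open MeasureTheory intervalIntegral Real

/-- If `m, n` are coprime positive integers with `n ≥ 2`, `T > 0`,
`T_c = mT/n`, and `p` is locally integrable and `T_c`-periodic (a.e.), then
`∫₀^{mT} p(t) sin((2π/T)(t + t₀)) dt = 0` for every `t₀`.  In particular the
subharmonic Melnikov function for the forcing `sin(ωt)`, `ω = 2π/T`, along any
orbit with rotation number `n/m`, `n ≥ 2`, vanishes identically. -/
theorem melnikov_vanishes_for_pure_harmonic_forcing
    (m n : ℕ) (hm : 0 < m) (hn : 2 ≤ n) (hmn : Nat.Coprime m n)
    (T : ℝ) (hT : 0 < T)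
    (Tc : ℝ) (hTc : Tc = (m : ℝ) * T / (n : ℝ))
    (p : ℝ → ℝ) (hp : LocallyIntegrable p volume)
    (hper : ∀ᵐ t : ℝ ∂volume, p (t + Tc) = p t) :
    ∀ t₀ : ℝ, ∫ t in (0:ℝ)..((m : ℝ) * T), p t * Real.sin (2 * π / T * (t + t₀)) = 0 := by
  intro t₀
  have hn0 : (0:ℝ) < (n:ℝ) := by
    have : 0 < n := lt_of_lt_of_le two_pos hn
    exact_mod_cast this
  have hm0 : (0:ℝ) < (m:ℝ) := by exact_mod_cast hm
  set ω : ℝ := 2 * π / T with hω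
  have hTne : T ≠ 0 := ne_of_gt hT
  have hmT : (m:ℝ) * T = (n:ℝ) * Tc := by
    rw [hTc]; field_simp
  -- a.e. shift
  have shift : ∀ (c : ℝ) {P : ℝ → Prop}, (∀ᵐ t : ℝ ∂volume, P t) →
      ∀ᵐ t : ℝ ∂volume, P (t + c) := fun c P h =>
    (measurePreserving_add_right volume c).quasiMeasurePreserving.ae h
  -- iterated periodicity
  have hperk : ∀ k : ℕ, ∀ᵐ t : ℝ ∂volume, p (t + k * Tc) = p t := by
    intro k
    induction k with
    | zero => simp
    | succ k ih =>
      filter_upwards [ih, shift ((k:ℝ) * Tc) hper] with t h1 h2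
      have e : t + ((k:ℕ)+1 : ℕ) * Tc = t + (k:ℝ) * Tc + Tc := by push_cast; ring
      rw [e, h2, h1]
  have hpmT : ∀ᵐ t : ℝ ∂volume, p (t + (m:ℝ) * T) = p t := by
    filter_upwards [hperk n] with t ht
    rw [hmT]; exact ht
  -- integrability of p times a bounded continuous function
  have hintg : ∀ (φ : ℝ → ℝ), Continuous φ → (∀ x, ‖φ x‖ ≤ 1) → ∀ a b : ℝ,
      IntervalIntegrable (fun t => p t * φ t) volume a b := by
    intro φ hφ hb a b
    rw [intervalIntegrable_iff]
    have hp' : IntegrableOn p (Set.uIoc a b) volume :=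
      (hp.integrableOn_isCompact isCompact_uIcc).mono_set Set.uIoc_subset_uIcc
    have := hp'.bdd_mul (hφ.aestronglyMeasurable.restrict) (Filter.Eventually.of_forall hb)
    exact this.congr (Filter.Eventually.of_forall fun x => mul_comm _ _)
  -- key shift identity
  have keystep : ∀ (φ : ℝ → ℝ), Continuous φ → (∀ x, ‖φ x‖ ≤ 1) →
      (∀ x, φ (x + (m:ℝ) * T) = φ x) →
      (∫ t in (0:ℝ)..((m:ℝ) * T), p t * φ (t + Tc))
        = ∫ t in (0:ℝ)..((m:ℝ) * T), p t * φ t := by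
    intro φ hφ hb hperφ
    have hTc0 : 0 < Tc := by rw [hTc]; positivity
    have hTcmT : Tc ≤ (m:ℝ) * T := by
      rw [hmT]
      have h2n : (2:ℝ) ≤ (n:ℝ) := by exact_mod_cast hn
      nlinarith [hTc0]
    -- step A : change of variables
    have hA : (∫ t in (0:ℝ)..((m:ℝ) * T), p t * φ (t + Tc))
        = ∫ u in Tc..((m:ℝ) * T + Tc), p (u - Tc) * φ u := by
      have := intervalIntegral.integral_comp_add_right
        (a := (0:ℝ)) (b := (m:ℝ) * T) (fun u => p (u - Tc) * φ u) Tc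
      simpa using this
    -- step B : a.e. periodicity of p
    have hB : (∫ u in Tc..((m:ℝ) * T + Tc), p (u - Tc) * φ u)
        = ∫ u in Tc..((m:ℝ) * T + Tc), p u * φ u := by
      apply intervalIntegral.integral_congr_ae
      filter_upwards [shift (-Tc) hper] with u hu _
      have e1 : u + -Tc = u - Tc := by ring
      have e2 : u - Tc + Tc = u := by ring
      rw [e1] at hu
      rw [e2] at hu
      rw [← hu]
    -- step C : translate the interval back
    have h1 : IntervalIntegrable (fun t => p t * φ t) volume Tc ((m:ℝ) * T) :=
      hintg φ hφ hb _ _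
    have h2 : IntervalIntegrable (fun t => p t * φ t) volume ((m:ℝ) * T) ((m:ℝ) * T + Tc) :=
      hintg φ hφ hb _ _
    have h3 : IntervalIntegrable (fun t => p t * φ t) volume 0 Tc :=
      hintg φ hφ hb _ _
    have hC2 : (∫ u in ((m:ℝ) * T)..((m:ℝ) * T + Tc), p u * φ u)
        = ∫ u in (0:ℝ)..Tc, p u * φ u := by
      have e1 : (∫ u in ((m:ℝ) * T)..((m:ℝ) * T + Tc), p u * φ u)
          = ∫ x in (0:ℝ)..Tc, p (x + (m:ℝ) * T) * φ (x + (m:ℝ) * T) := by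
        rw [intervalIntegral.integral_comp_add_right (fun u => p u * φ u) ((m:ℝ) * T),
          zero_add, add_comm]
      rw [e1]
      apply intervalIntegral.integral_congr_ae
      filter_upwards [hpmT] with u hu _
      rw [hu, hperφ]
    calc (∫ t in (0:ℝ)..((m:ℝ) * T), p t * φ (t + Tc))
        = ∫ u in Tc..((m:ℝ) * T + Tc), p u * φ u := by rw [hA, hB]
      _ = (∫ u in Tc..((m:ℝ) * T), p u * φ u)
          + ∫ u in ((m:ℝ) * T)..((m:ℝ) * T + Tc), p u * φ u :=
            (intervalIntegral.integral_add_adjacent_intervals h1 h2).symm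
      _ = (∫ u in (0:ℝ)..Tc, p u * φ u) + ∫ u in Tc..((m:ℝ) * T), p u * φ u := by
            rw [hC2]; ring
      _ = ∫ t in (0:ℝ)..((m:ℝ) * T), p t * φ t :=
            intervalIntegral.integral_add_adjacent_intervals h3 h1
  -- apply to sin and cos
  have hωmT : ω * ((m:ℝ) * T) = (m:ℕ) * (2 * π) := by
    rw [hω]; field_simp
  set F : ℝ := ∫ t in (0:ℝ)..((m:ℝ) * T), p t * Real.sin (ω * (t + t₀)) with hF
  set G : ℝ := ∫ t in (0:ℝ)..((m:ℝ) * T), p t * Real.cos (ω * (t + t₀)) with hG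
  set θ : ℝ := ω * Tc with hθ
  have hcont : Continuous fun x : ℝ => ω * (x + t₀) :=
    continuous_const.mul (continuous_id.add continuous_const)
  have hFint : IntervalIntegrable (fun t => p t * Real.sin (ω * (t + t₀))) volume 0 ((m:ℝ)*T) :=
    hintg _ (Real.continuous_sin.comp hcont)
      (fun x => by rw [Real.norm_eq_abs]; exact Real.abs_sin_le_one _) _ _
  have hGint : IntervalIntegrable (fun t => p t * Real.cos (ω * (t + t₀))) volume 0 ((m:ℝ)*T) :=
    hintg _ (Real.continuous_cos.comp hcont)
      (fun x => by rw [Real.norm_eq_abs]; exact Real.abs_cos_le_one _) _ _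
  have E1 : F = Real.cos θ * F + Real.sin θ * G := by
    have hk := keystep (fun x => Real.sin (ω * (x + t₀))) (Real.continuous_sin.comp hcont)
      (fun x => by rw [Real.norm_eq_abs]; exact Real.abs_sin_le_one _)
      (fun x => by
        have e : ω * (x + (m:ℝ) * T + t₀) = ω * (x + t₀) + (m:ℕ) * (2 * π) := by
          rw [← hωmT]; ring
        simp only [e, Real.sin_add_nat_mul_two_pi])
    rw [← hF] at hk
    have hk' : (∫ t in (0:ℝ)..((m:ℝ) * T), p t * Real.sin (ω * (t + Tc + t₀))) = F := by
      simpa using hk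
    refine hk'.symm.trans ?_
    have e : ∀ t : ℝ, p t * Real.sin (ω * (t + Tc + t₀))
        = Real.cos θ * (p t * Real.sin (ω * (t + t₀)))
          + Real.sin θ * (p t * Real.cos (ω * (t + t₀))) := by
      intro t
      have e2 : ω * (t + Tc + t₀) = ω * (t + t₀) + θ := by rw [hθ]; ring
      rw [e2, Real.sin_add]; ring
    calc (∫ t in (0:ℝ)..((m:ℝ) * T), p t * Real.sin (ω * (t + Tc + t₀)))
        = ∫ t in (0:ℝ)..((m:ℝ) * T),
            (Real.cos θ * (p t * Real.sin (ω * (t + t₀)))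
              + Real.sin θ * (p t * Real.cos (ω * (t + t₀)))) := by
          simp only [e]
      _ = Real.cos θ * F + Real.sin θ * G := by
          rw [intervalIntegral.integral_add (hFint.const_mul _) (hGint.const_mul _),
            intervalIntegral.integral_const_mul, intervalIntegral.integral_const_mul]
  have E2 : G = Real.cos θ * G - Real.sin θ * F := by
    have hk := keystep (fun x => Real.cos (ω * (x + t₀))) (Real.continuous_cos.comp hcont)
      (fun x => by rw [Real.norm_eq_abs]; exact Real.abs_cos_le_one _)
      (fun x => by
        have e : ω * (x + (m:ℝ) * T + t₀) = ω * (x + t₀) + (m:ℕ) * (2 * π) := by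
          rw [← hωmT]; ring
        simp only [e, Real.cos_add_nat_mul_two_pi])
    rw [← hG] at hk
    have hk' : (∫ t in (0:ℝ)..((m:ℝ) * T), p t * Real.cos (ω * (t + Tc + t₀))) = G := by
      simpa using hk
    refine hk'.symm.trans ?_
    have e : ∀ t : ℝ, p t * Real.cos (ω * (t + Tc + t₀))
        = Real.cos θ * (p t * Real.cos (ω * (t + t₀)))
          - Real.sin θ * (p t * Real.sin (ω * (t + t₀))) := by
      intro t
      have e2 : ω * (t + Tc + t₀) = ω * (t + t₀) + θ := by rw [hθ]; ring
      rw [e2, Real.cos_add]; ring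
    calc (∫ t in (0:ℝ)..((m:ℝ) * T), p t * Real.cos (ω * (t + Tc + t₀)))
        = ∫ t in (0:ℝ)..((m:ℝ) * T),
            (Real.cos θ * (p t * Real.cos (ω * (t + t₀)))
              - Real.sin θ * (p t * Real.sin (ω * (t + t₀)))) := by
          simp only [e]
      _ = Real.cos θ * G - Real.sin θ * F := by
          rw [intervalIntegral.integral_sub (hGint.const_mul _) (hFint.const_mul _),
            intervalIntegral.integral_const_mul, intervalIntegral.integral_const_mul]
  -- cos θ ≠ 1
  have hcθ : Real.cos θ ≠ 1 := by
    intro hc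
    obtain ⟨k, hk⟩ := (Real.cos_eq_one_iff θ).mp hc
    have hθval : θ = 2 * π * m / n := by
      have hne : (n:ℝ) ≠ 0 := ne_of_gt hn0
      rw [hθ, hω, hTc]
      field_simp
    have h2π : (0:ℝ) < 2 * π := by positivity
    have h1 : (2 * π) * ((k:ℝ) * n) = (2 * π) * m := by
      have h0 : (k:ℝ) * (2 * π) = 2 * π * m / n := by rw [hk, hθval]
      have hne : (n:ℝ) ≠ 0 := ne_of_gt hn0
      field_simp at h0
      rw [h0]
    have h2 : (k:ℝ) * n = m := mul_left_cancel₀ (ne_of_gt h2π) h1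
    have hmkZ : (m:ℤ) = k * n := by exact_mod_cast h2.symm
    have hdvdN : n ∣ m := Int.ofNat_dvd.mp ⟨k, by rw [hmkZ]; ring⟩
    have hg : Nat.gcd m n = 1 := hmn
    have hd1 : n ∣ 1 := hg ▸ Nat.dvd_gcd hdvdN dvd_rfl
    have := Nat.le_of_dvd one_pos hd1
    omega
  -- conclude F = 0
  have hs : Real.sin θ ^ 2 + Real.cos θ ^ 2 = 1 := Real.sin_sq_add_cos_sq θ
  have hzero : (2 - 2 * Real.cos θ) * F = 0 := by
    linear_combination (1 - Real.cos θ) * E1 + Real.sin θ * E2 - F * hs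
  have hc1 : Real.cos θ ≤ 1 := Real.cos_le_one θ
  have : F = 0 := by
    have h2c : 2 - 2 * Real.cos θ ≠ 0 := by
      intro h
      apply hcθ
      linarith
    exact (mul_eq_zero.mp hzero).resolve_left h2c
  simpa [hF, hω] using this
end

section
/- Let E be a finite-dimensional real normed vector space, let F : E → E be C¹ with DF Lipschitz on a neighborhood of a point x* (in particular this holds if F is C²), and suppose F(x*) = 0 and DF(x*) is invertible. Then there exist δ > 0 and C > 0 such that for every x₀ with ‖x₀ − x*‖ < δ, the Newton iteration x_{k+1} = x_k − (DF(x_k))⁻¹ F(x_k) is well defined for all k (i.e. DF(x_k) is invertible and ‖x_k − x*‖ < δ for all k), the sequence (x_k) converges to x*, and the convergence is quadratic: ‖x_{k+1} − x*‖ ≤ C ‖x_k − x*‖² for all k. -/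
/-- One step of the Newton method for solving `F(x) = 0`:
`x ↦ x - (DF(x))⁻¹ F(x)`, where the inverse is the inverse of the Fréchet
derivative as a continuous linear map (junk value `0` if not invertible). -/
noncomputable def newtonStep {E : Type*} [NormedAddCommGroup E] [NormedSpace ℝ E]
    (F : E → E) (x : E) : E :=
  x - (fderiv ℝ F x).inverse (F x)

/-- Local quadratic convergence of the Newton method.  If `F : E → E`
is C¹ on a finite-dimensional real normed space with `DF` Lipschitz near a zero `x✶`
of `F` at which `DF(x✶)` is invertible, then there are `δ > 0` and `C > 0` such that
for every starting point `x₀` with `‖x₀ - x✶‖ < δ` the Newton iterates are well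
defined (the derivative is invertible at each of them and they stay `δ`-close to
`x✶`), converge to `x✶`, and satisfy `‖x_{k+1} - x✶‖ ≤ C ‖x_k - x✶‖²`. -/
theorem newton_method_quadratic_convergence
    {E : Type*} [NormedAddCommGroup E] [NormedSpace ℝ E] [FiniteDimensional ℝ E]
    (F : E → E) (hF : ContDiff ℝ 1 F)
    (xstar : E)
    (hlip : ∃ (K : NNReal) (U : Set E), U ∈ nhds xstar ∧
      LipschitzOnWith K (fun x => fderiv ℝ F x) U)
    (hzero : F xstar = 0)
    (hinv : IsUnit (fderiv ℝ F xstar)) :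
    ∃ δ > (0 : ℝ), ∃ C > (0 : ℝ), ∀ x₀ : E, ‖x₀ - xstar‖ < δ →
      (∀ k : ℕ, IsUnit (fderiv ℝ F ((newtonStep F)^[k] x₀)) ∧
        ‖(newtonStep F)^[k] x₀ - xstar‖ < δ) ∧
      Filter.Tendsto (fun k : ℕ => (newtonStep F)^[k] x₀) Filter.atTop (nhds xstar) ∧
      ∀ k : ℕ, ‖(newtonStep F)^[k + 1] x₀ - xstar‖ ≤ C * ‖(newtonStep F)^[k] x₀ - xstar‖ ^ 2 := by
  classical
  obtain ⟨K₀, U, hU, hK₀⟩ := hlip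
  set f : E → (E →L[ℝ] E) := fun x => fderiv ℝ F x with hfdef
  have hfc : Continuous f := hF.continuous_fderiv one_ne_zero
  set K : ℝ := (K₀ : ℝ) + 1 with hKdef
  have hKpos : (0 : ℝ) < K := by positivity
  have hlipK : ∀ x ∈ U, ∀ y ∈ U, ‖f x - f y‖ ≤ K * ‖x - y‖ := by
    intro x hx y hy
    have := hK₀.dist_le_mul x hx y hy
    rw [dist_eq_norm, dist_eq_norm] at this
    have h2 : (K₀ : ℝ) * ‖x - y‖ ≤ K * ‖x - y‖ := by
      apply mul_le_mul_of_nonneg_right _ (norm_nonneg _)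
      simp [hKdef]
    exact this.trans h2
  set M : ℝ := ‖Ring.inverse (f xstar)‖ + 1 with hMdef
  have hMpos : (0 : ℝ) < M := by positivity
  set C : ℝ := 2 * M * K with hCdef
  have hCpos : (0 : ℝ) < C := by positivity
  -- a neighborhood where f is invertible with inverse bounded by M, inside U
  have hVmem : {x : E | IsUnit (f x)} ∩ {x : E | ‖Ring.inverse (f x)‖ < M} ∩ U ∈ nhds xstar := by
    refine Filter.inter_mem (Filter.inter_mem ?_ ?_) hU
    · exact hfc.continuousAt.preimage_mem_nhds (Units.isOpen.mem_nhds hinv)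
    · have hcont : ContinuousAt (fun x => ‖Ring.inverse (f x)‖) xstar := by
        have h1 : ContinuousAt Ring.inverse (f xstar) := by
          have := NormedRing.inverse_continuousAt hinv.unit
          simpa using this
        exact (h1.comp hfc.continuousAt).norm
      have : ‖Ring.inverse (f xstar)‖ < M := by simp [hMdef]
      exact hcont.eventually_lt_const this
  obtain ⟨ε, hεpos, hεsub⟩ := Metric.nhds_basis_closedBall.mem_iff.mp hVmem
  refine ⟨min ε (1 / (2 * C)), by positivity, C, hCpos, ?_⟩
  set δ : ℝ := min ε (1 / (2 * C)) with hδdef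
  have hδpos : (0 : ℝ) < δ := by positivity
  have hδε : δ ≤ ε := min_le_left _ _
  have hδC : C * δ ≤ 1 / 2 := by
    have : δ ≤ 1 / (2 * C) := min_le_right _ _
    calc C * δ ≤ C * (1 / (2 * C)) := by nlinarith
      _ = 1 / 2 := by field_simp
  -- membership in the good set
  have hball : ∀ x : E, ‖x - xstar‖ ≤ δ →
      IsUnit (f x) ∧ ‖Ring.inverse (f x)‖ ≤ M ∧ x ∈ U := by
    intro x hx
    have : x ∈ Metric.closedBall xstar ε := by
      rw [Metric.mem_closedBall, dist_eq_norm]; linarith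
    have hxV := hεsub this
    exact ⟨hxV.1.1, le_of_lt hxV.1.2, hxV.2⟩
  -- the key one-step estimate
  have hstep : ∀ x : E, ‖x - xstar‖ ≤ δ →
      IsUnit (f x) ∧ ‖newtonStep F x - xstar‖ ≤ C * ‖x - xstar‖ ^ 2 := by
    intro x hx
    obtain ⟨hu, hM, hxU⟩ := hball x hx
    refine ⟨hu, ?_⟩
    set r : ℝ := ‖x - xstar‖ with hrdef
    have hr0 : 0 ≤ r := norm_nonneg _
    -- the ball s of radius r around xstar is inside U
    set s : Set E := Metric.closedBall xstar r with hsdef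
    have hsU : s ⊆ U := by
      intro z hz
      rw [Metric.mem_closedBall, dist_eq_norm] at hz
      exact (hball z (hz.trans hx)).2.2
    have hxs : x ∈ s := by rw [Metric.mem_closedBall, dist_eq_norm]
    have hxstars : xstar ∈ s := Metric.mem_closedBall_self hr0
    -- Taylor estimate via mean value inequality applied to g z = F z - f x z
    have hdiffF : Differentiable ℝ F := hF.differentiable one_ne_zero
    set g : E → E := fun z => F z - f x z with hgdef
    have hgdiff : ∀ z ∈ s, DifferentiableAt ℝ g z := fun z _ =>
      (hdiffF z).sub ((f x).differentiable z)
    have hgderiv : ∀ z ∈ s, ‖fderiv ℝ g z‖ ≤ 2 * K * r := by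
      intro z hz
      have : fderiv ℝ g z = f z - f x := by
        rw [hgdef]
        rw [fderiv_fun_sub (hdiffF z) ((f x).differentiable z)]
        simp [hfdef]
      rw [this]
      have hzx : ‖z - x‖ ≤ 2 * r := by
        rw [Metric.mem_closedBall, dist_eq_norm] at hz
        calc ‖z - x‖ ≤ ‖z - xstar‖ + ‖xstar - x‖ := norm_sub_le_norm_sub_add_norm_sub _ _ _
          _ ≤ r + r := by
              rw [norm_sub_rev xstar x]
              exact add_le_add hz le_rfl
          _ = 2 * r := by ring
      calc ‖f z - f x‖ ≤ K * ‖z - x‖ := hlipK z (hsU hz) x hxU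
        _ ≤ K * (2 * r) := by nlinarith
        _ = 2 * K * r := by ring
    have hmvt : ‖g x - g xstar‖ ≤ 2 * K * r * ‖x - xstar‖ :=
      Convex.norm_image_sub_le_of_norm_fderiv_le hgdiff hgderiv (convex_closedBall _ _)
        hxstars hxs
    have htay : ‖F x - f x (x - xstar)‖ ≤ 2 * K * r ^ 2 := by
      have : g x - g xstar = F x - f x (x - xstar) := by
        simp only [hgdef, map_sub]
        rw [hzero]
        abel
      rw [this] at hmvt
      calc ‖F x - f x (x - xstar)‖ ≤ 2 * K * r * r := hmvt
        _ = 2 * K * r ^ 2 := by ring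
    -- algebra: newtonStep F x - xstar = (Ring.inverse (f x)) (f x (x - xstar) - F x)
    set B : E →L[ℝ] E := Ring.inverse (f x) with hBdef
    have hBf : B * f x = 1 := Ring.inverse_mul_cancel _ hu
    have hkey : newtonStep F x - xstar = B (f x (x - xstar) - F x) := by
      have hinv_eq : (fderiv ℝ F x).inverse = B := by
        rw [hBdef, ContinuousLinearMap.ringInverse_eq_inverse, hfdef]
      have hBfx : B (f x (x - xstar)) = x - xstar := by
        have : B (f x (x - xstar)) = (B * f x) (x - xstar) := rfl
        rw [this, hBf]; rfl
      rw [newtonStep, hinv_eq, map_sub, hBfx]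
      abel
    rw [hkey]
    calc ‖B (f x (x - xstar) - F x)‖ ≤ ‖B‖ * ‖f x (x - xstar) - F x‖ := B.le_opNorm _
      _ ≤ M * (2 * K * r ^ 2) := by
          apply mul_le_mul hM _ (norm_nonneg _) (le_of_lt hMpos)
          rw [norm_sub_rev]; exact htay
      _ = C * ‖x - xstar‖ ^ 2 := by rw [hCdef, hrdef]; ring
  -- contraction consequence
  have hcontr : ∀ x : E, ‖x - xstar‖ < δ →
      ‖newtonStep F x - xstar‖ ≤ (1 / 2) * ‖x - xstar‖ := by
    intro x hx
    have h := (hstep x hx.le).2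
    have : C * ‖x - xstar‖ ^ 2 ≤ (1 / 2) * ‖x - xstar‖ := by nlinarith [norm_nonneg (x - xstar)]
    linarith
  intro x₀ hx₀
  -- main induction
  have hiter : ∀ k : ℕ, ‖(newtonStep F)^[k] x₀ - xstar‖ < δ ∧
      ‖(newtonStep F)^[k] x₀ - xstar‖ ≤ (1 / 2) ^ k * ‖x₀ - xstar‖ := by
    intro k
    induction k with
    | zero => simpa using hx₀
    | succ n ih =>
      obtain ⟨ih1, ih2⟩ := ih
      have h1 := hcontr _ ih1
      rw [Function.iterate_succ_apply']
      constructor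
      · calc ‖newtonStep F ((newtonStep F)^[n] x₀) - xstar‖
            ≤ (1 / 2) * ‖(newtonStep F)^[n] x₀ - xstar‖ := h1
          _ ≤ ‖(newtonStep F)^[n] x₀ - xstar‖ := by nlinarith [norm_nonneg ((newtonStep F)^[n] x₀ - xstar)]
          _ < δ := ih1
      · calc ‖newtonStep F ((newtonStep F)^[n] x₀) - xstar‖
            ≤ (1 / 2) * ‖(newtonStep F)^[n] x₀ - xstar‖ := h1
          _ ≤ (1 / 2) * ((1 / 2) ^ n * ‖x₀ - xstar‖) := by nlinarith
          _ = (1 / 2) ^ (n + 1) * ‖x₀ - xstar‖ := by ring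
  refine ⟨fun k => ⟨(hstep _ (hiter k).1.le).1, (hiter k).1⟩, ?_, ?_⟩
  · rw [tendsto_iff_norm_sub_tendsto_zero]
    have hbound : Filter.Tendsto (fun k : ℕ => (1 / 2 : ℝ) ^ k * ‖x₀ - xstar‖)
        Filter.atTop (nhds 0) := by
      have := tendsto_pow_atTop_nhds_zero_of_lt_one (by norm_num : (0:ℝ) ≤ 1/2) (by norm_num)
      simpa using this.mul_const ‖x₀ - xstar‖
    exact squeeze_zero (fun k => norm_nonneg _) (fun k => (hiter k).2) hbound
  · intro k
    rw [Function.iterate_succ_apply']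
    exact (hstep _ (hiter k).1.le).2
end
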